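/- Let U ⊆ ℂ be an open set, let ω* ∈ U with ω* real, and let k : U → ℂ be complex-analytic on U such that k(ω) is real for every real ω ∈ U and k'(ω*) ≠ 0. Then there exist constants B₁, B₂ > 0 and an open neighbourhood V ⊆ U of ω* such that for all ω ∈ V: B₁·|Im ω| ≤ |Im k(ω)| ≤ B₂·|Im ω|. -/

import Mathlib

open Complex

/-- Near an interior band point `ω*` (real, with `k` analytic, real on the reals, and
`k'(ω*) ≠ 0`), the imaginary parts of `ω` and `k(ω)` are comparable:
`B₁|Im ω| ≤ |Im k(ω)| ≤ B₂|Im ω|` on a neighbourhood of `ω*`. -/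
theorem stmt_15 (U : Set ℂ) (hU : IsOpen U) (ωstar : ℂ) (hmem : ωstar ∈ U)
    (hreal : ωstar.im = 0) (k : ℂ → ℂ) (hk : DifferentiableOn ℂ k U)
    (hkreal : ∀ ω ∈ U, ω.im = 0 → (k ω).im = 0)
    (hk' : deriv k ωstar ≠ 0) :
    ∃ B₁ B₂ : ℝ, 0 < B₁ ∧ 0 < B₂ ∧
      ∃ V : Set ℂ, IsOpen V ∧ ωstar ∈ V ∧ V ⊆ U ∧
        ∀ ω ∈ V, B₁ * |ω.im| ≤ |(k ω).im| ∧ |(k ω).im| ≤ B₂ * |ω.im| := by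
  set c : ℂ := deriv k ωstar with hc
  have hωr : ωstar = (ωstar.re : ℂ) := Complex.ext rfl (by simp [hreal])
  have hkd : HasDerivAt k c ωstar :=
    (hk.differentiableAt (hU.mem_nhds hmem)).hasDerivAt
  -- c is real
  have hcim : c.im = 0 := by
    have hder : HasDerivAt (fun t : ℝ => k ↑t) c ωstar.re := by
      apply HasDerivAt.comp_ofReal
      rwa [← hωr]
    have him : HasDerivAt (fun t : ℝ => (k ↑t).im) c.im ωstar.re :=
      (Complex.imCLM.hasFDerivAt.comp_hasDerivAt _ hder)
    have hev : (fun t : ℝ => (k ↑t).im) =ᶠ[nhds ωstar.re] fun _ => (0 : ℝ) := by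
      have : (fun t : ℝ => (t : ℂ)) ⁻¹' U ∈ nhds ωstar.re := by
        apply (hU.preimage Complex.continuous_ofReal).mem_nhds
        simpa [← hωr] using hmem
      filter_upwards [this] with t ht
      exact hkreal _ ht (by simp)
    have h0 : HasDerivAt (fun t : ℝ => (k ↑t).im) 0 ωstar.re :=
      (hasDerivAt_const ωstar.re (0 : ℝ)).congr_of_eventuallyEq hev
    exact him.unique h0
  have hcpos : 0 < ‖c‖ := norm_pos_iff.mpr hk'
  -- continuity of deriv k at ωstar
  have hAn : AnalyticOnNhd ℂ k U := hk.analyticOnNhd hU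
  have hdiff' : DifferentiableOn ℂ (deriv k) U := (hAn.deriv).differentiableOn
  have hcont : ContinuousAt (deriv k) ωstar :=
    (hdiff'.differentiableAt (hU.mem_nhds hmem)).continuousAt
  obtain ⟨r₁, hr₁pos, hr₁⟩ := Metric.isOpen_iff.mp hU ωstar hmem
  have hball : {z | ‖deriv k z - c‖ < ‖c‖ / 2} ∈ nhds ωstar := by
    have := hcont (Metric.ball_mem_nhds c (by positivity : (0:ℝ) < ‖c‖/2))
    filter_upwards [this] with z hz
    simpa [dist_eq_norm] using hz
  obtain ⟨r₂, hr₂pos, hr₂⟩ := Metric.mem_nhds_iff.mp hball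
  set r := min r₁ r₂ with hrdef
  have hrpos : 0 < r := lt_min hr₁pos hr₂pos
  have hsubU : Metric.ball ωstar r ⊆ U := fun z hz => hr₁ (Metric.ball_subset_ball (min_le_left _ _) hz)
  have hsubD : ∀ z ∈ Metric.ball ωstar r, ‖deriv k z - c‖ ≤ ‖c‖ / 2 := fun z hz =>
    le_of_lt (hr₂ (Metric.ball_subset_ball (min_le_right _ _) hz))
  refine ⟨‖c‖ / 2, 3 * ‖c‖ / 2, by positivity, by positivity, Metric.ball ωstar r,
    Metric.isOpen_ball, Metric.mem_ball_self hrpos, hsubU, ?_⟩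
  intro ω hω
  -- x = Re ω is in the ball
  set x : ℂ := (ω.re : ℂ) with hx
  have hxball : x ∈ Metric.ball ωstar r := by
    rw [Metric.mem_ball] at hω ⊢
    calc dist x ωstar = |ω.re - ωstar.re| := by
          rw [hωr, dist_eq, hx]
          norm_cast
          
      _ ≤ ‖ω - ωstar‖ := by
          simpa using Complex.abs_re_le_norm (ω - ωstar)
      _ < r := by rwa [← dist_eq_norm]
  have hkx : (k x).im = 0 := hkreal _ (hsubU hxball) (by simp [hx])
  -- MVT estimate for f z = k z - c * z
  have hmvt : ‖(k ω - c * ω) - (k x - c * x)‖ ≤ ‖c‖ / 2 * ‖ω - x‖ := by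
    apply Convex.norm_image_sub_le_of_norm_hasDerivWithin_le
      (f' := fun z => deriv k z - c)
      (fun z hz => ?_) (fun z hz => hsubD z hz) (convex_ball ωstar r) hxball hω
    have h1 : HasDerivAt k (deriv k z) z :=
      (hk.differentiableAt (hU.mem_nhds (hsubU hz))).hasDerivAt
    exact ((h1.sub ((hasDerivAt_id z).const_mul c)).hasDerivWithinAt).congr_deriv (by ring)
  have homx : ω - x = (ω.im : ℂ) * I := by
    apply Complex.ext <;> simp [hx]
  have hn : ‖ω - x‖ = |ω.im| := by
    rw [homx]; simp
  -- imaginary part of the error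
  have key : |(k ω).im - c.re * ω.im| ≤ ‖c‖ / 2 * |ω.im| := by
    have h2 : |((k ω - c * ω) - (k x - c * x)).im| ≤ ‖c‖ / 2 * |ω.im| := by
      calc |((k ω - c * ω) - (k x - c * x)).im| ≤ ‖(k ω - c * ω) - (k x - c * x)‖ :=
            Complex.abs_im_le_norm _
        _ ≤ ‖c‖ / 2 * ‖ω - x‖ := hmvt
        _ = ‖c‖ / 2 * |ω.im| := by rw [hn]
    have h3 : ((k ω - c * ω) - (k x - c * x)).im = (k ω).im - c.re * ω.im := by
      simp [Complex.sub_im, Complex.mul_im, (show (k ↑ω.re).im = 0 from hkx), hcim, hx]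
          
    rwa [h3] at h2
  have hcre : |c.re| = ‖c‖ := by
    rw [← Complex.abs_re_eq_norm.mpr hcim]
  constructor
  · -- lower bound
    have : |c.re * ω.im| - |(k ω).im| ≤ ‖c‖ / 2 * |ω.im| := by
      have := abs_sub_abs_le_abs_sub (c.re * ω.im) ((k ω).im)
      nlinarith [abs_sub_comm ((k ω).im) (c.re * ω.im), key]
    have h4 : |c.re * ω.im| = ‖c‖ * |ω.im| := by rw [abs_mul, hcre]
    nlinarith
  · have := abs_sub_abs_le_abs_sub ((k ω).im) (c.re * ω.im)
    have h4 : |c.re * ω.im| = ‖c‖ * |ω.im| := by rw [abs_mul, hcre]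
    nlinarith [key]
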